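/- Let {t_b}_{b∈L} be a solution of problem (B). If t_max > ∑_{b∈L} r_b, then t_b ≥ r_b for all b ∈ L. -/
import Mathlib


/-- `betaP p t r = ∑_{i=0}^{r-1} C(t,i) (1-p)^i p^(t-i)`. -/
noncomputable def betaP (p : ℝ) (t r : ℕ) : ℝ :=
  ∑ i ∈ Finset.range r, (t.choose i : ℝ) * (1 - p) ^ i * p ^ (t - i)

/-- Expected rank function `E(r,t) = ∑_{i=0}^{t} C(t,i) (1-p)^i p^(t-i) * min{i,r}`. -/
noncomputable def expRank (p : ℝ) (r t : ℕ) : ℝ :=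
  ∑ i ∈ Finset.range (t + 1),
    (t.choose i : ℝ) * (1 - p) ^ i * p ^ (t - i) * ((min i r : ℕ) : ℝ)

open Finset
lemma full_sum (p : ℝ) (t : ℕ) :
    ∑ i ∈ range (t + 1), (t.choose i : ℝ) * (1 - p) ^ i * p ^ (t - i) = 1 := by
  have h := add_pow (1 - p) p t
  simp only [sub_add_cancel, one_pow] at h
  conv_rhs => rw [h]
  exact Finset.sum_congr rfl (fun i _ => by ring)

lemma term_nonneg {p : ℝ} (hp0 : 0 < p) (hp1 : p < 1) (t i : ℕ) :
    0 ≤ (t.choose i : ℝ) * (1 - p) ^ i * p ^ (t - i) := by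
  have h1 : (0:ℝ) ≤ 1 - p := by linarith
  positivity

lemma term_pos {p : ℝ} (hp0 : 0 < p) (hp1 : p < 1) {t i : ℕ} (h : i ≤ t) :
    0 < (t.choose i : ℝ) * (1 - p) ^ i * p ^ (t - i) := by
  have : 0 < (t.choose i : ℝ) := by exact_mod_cast Nat.choose_pos h
  have h1 : (0:ℝ) < 1 - p := by linarith
  positivity

lemma betaP_eq_one {p : ℝ} {t r : ℕ} (h : t < r) : betaP p t r = 1 := by
  have : betaP p t r = ∑ i ∈ range (t + 1), (t.choose i : ℝ) * (1 - p) ^ i * p ^ (t - i) := by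
    rw [betaP]
    apply (Finset.sum_subset (Finset.range_subset_range.2 h) ?_).symm
    intro i _ hi
    simp only [Finset.mem_range, not_lt] at hi
    rw [Nat.choose_eq_zero_of_lt (by omega)]
    simp
  rw [this, full_sum]

lemma betaP_lt_one {p : ℝ} (hp0 : 0 < p) (hp1 : p < 1) {t r : ℕ} (h : r ≤ t) :
    betaP p t r < 1 := by
  have key : betaP p t r < ∑ i ∈ range (t + 1), (t.choose i : ℝ) * (1 - p) ^ i * p ^ (t - i) := by
    rw [betaP]
    apply Finset.sum_lt_sum_of_subset (Finset.range_subset_range.2 (by omega))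
      (i := r) (by simp; omega) (by simp) (term_pos hp0 hp1 h)
    intro j _ _
    exact term_nonneg hp0 hp1 t j
  rwa [full_sum] at key

lemma expRank_succ (p : ℝ) (r t : ℕ) :
    expRank p r (t + 1) = expRank p r t + (1 - p) * betaP p t r := by
  have step1 : expRank p r (t + 1)
      = ∑ i ∈ range (t + 1),
          ((t.choose i : ℝ) + (t.choose (i+1) : ℝ)) * (1 - p) ^ (i+1) * p ^ (t - i)
            * ((min (i+1) r : ℕ) : ℝ) := by
    rw [expRank, Finset.sum_range_succ']
    simp only [Nat.choose_succ_succ, Nat.zero_min, Nat.min_zero, Nat.cast_zero, mul_zero, add_zero,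
      Nat.cast_add]
    apply Finset.sum_congr rfl
    intro i _
    have h1 : t + 1 - (i + 1) = t - i := by omega
    rw [h1]
  have step2 : expRank p r (t + 1)
      = (∑ i ∈ range (t + 1), (t.choose i : ℝ) * (1 - p) ^ (i+1) * p ^ (t - i) * ((min (i+1) r : ℕ) : ℝ))
      + (∑ i ∈ range (t + 1), (t.choose (i+1) : ℝ) * (1 - p) ^ (i+1) * p ^ (t - i) * ((min (i+1) r : ℕ) : ℝ)) := by
    rw [step1, ← Finset.sum_add_distrib]
    exact Finset.sum_congr rfl (fun i _ => by ring)
  have hS2 : (∑ i ∈ range (t + 1), (t.choose (i+1) : ℝ) * (1 - p) ^ (i+1) * p ^ (t - i) * ((min (i+1) r : ℕ) : ℝ))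
      = p * expRank p r t := by
    have h0 : (∑ i ∈ range (t + 2), (t.choose i : ℝ) * (1 - p) ^ i * p ^ (t + 1 - i) * ((min i r : ℕ) : ℝ))
        = ∑ i ∈ range (t + 1), (t.choose (i+1) : ℝ) * (1 - p) ^ (i+1) * p ^ (t - i) * ((min (i+1) r : ℕ) : ℝ) := by
      rw [Finset.sum_range_succ']
      simp only [Nat.zero_min, Nat.min_zero, Nat.cast_zero, mul_zero, add_zero]
      apply Finset.sum_congr rfl
      intro i _
      have h1 : t + 1 - (i + 1) = t - i := by omega
      rw [h1]
    rw [← h0, Finset.sum_range_succ, Nat.choose_succ_self]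
    simp only [Nat.cast_zero, zero_mul, add_zero]
    rw [expRank, Finset.mul_sum]
    apply Finset.sum_congr rfl
    intro i hi
    simp only [Finset.mem_range] at hi
    have h1 : t + 1 - i = (t - i) + 1 := by omega
    rw [h1, pow_succ]
    ring
  have hmin : ∀ i : ℕ, ((min (i+1) r : ℕ) : ℝ) = ((min i r : ℕ) : ℝ) + (if i < r then (1:ℝ) else 0) := by
    intro i
    rcases lt_or_ge i r with h | h
    · rw [if_pos h]
      have h1 : min (i+1) r = min i r + 1 := by omega
      rw [h1]; push_cast; ring
    · rw [if_neg (not_lt.2 h)]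
      have h1 : min (i+1) r = min i r := by omega
      rw [h1, add_zero]
  have hT : (∑ i ∈ range (t + 1), (t.choose i : ℝ) * (1 - p) ^ i * p ^ (t - i) * (if i < r then (1:ℝ) else 0))
      = betaP p t r := by
    have e1 : ∀ i : ℕ, (t.choose i : ℝ) * (1 - p) ^ i * p ^ (t - i) * (if i < r then (1:ℝ) else 0)
        = (if i < r then (t.choose i : ℝ) * (1 - p) ^ i * p ^ (t - i) else 0) := by
      intro i; split <;> simp
    simp only [e1]
    set M := max (t + 1) r with hM
    have left : (∑ i ∈ range (t + 1), (if i < r then (t.choose i : ℝ) * (1 - p) ^ i * p ^ (t - i) else 0))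
        = ∑ i ∈ range M, (if i < r then (t.choose i : ℝ) * (1 - p) ^ i * p ^ (t - i) else 0) := by
      apply Finset.sum_subset (Finset.range_subset_range.2 (le_max_left _ _))
      intro i _ hi
      simp only [Finset.mem_range, not_lt] at hi
      rw [Nat.choose_eq_zero_of_lt (by omega)]
      simp
    have right : betaP p t r
        = ∑ i ∈ range M, (if i < r then (t.choose i : ℝ) * (1 - p) ^ i * p ^ (t - i) else 0) := by
      rw [betaP]
      rw [show (∑ i ∈ range r, (t.choose i : ℝ) * (1 - p) ^ i * p ^ (t - i))
          = ∑ i ∈ range r, (if i < r then (t.choose i : ℝ) * (1 - p) ^ i * p ^ (t - i) else 0) from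
        Finset.sum_congr rfl (fun i hi => by rw [if_pos (Finset.mem_range.1 hi)])]
      apply Finset.sum_subset (Finset.range_subset_range.2 (le_max_right _ _))
      intro i _ hi
      simp only [Finset.mem_range, not_lt] at hi
      rw [if_neg (by omega)]
    rw [left, right]
  have hS1 : (∑ i ∈ range (t + 1), (t.choose i : ℝ) * (1 - p) ^ (i+1) * p ^ (t - i) * ((min (i+1) r : ℕ) : ℝ))
      = (1 - p) * (expRank p r t + betaP p t r) := by
    have expand : ∀ i ∈ range (t + 1), (t.choose i : ℝ) * (1 - p) ^ (i+1) * p ^ (t - i) * ((min (i+1) r : ℕ) : ℝ)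
        = (1 - p) * ((t.choose i : ℝ) * (1 - p) ^ i * p ^ (t - i) * ((min i r : ℕ) : ℝ))
        + (1 - p) * ((t.choose i : ℝ) * (1 - p) ^ i * p ^ (t - i) * (if i < r then (1:ℝ) else 0)) := by
      intro i _
      rw [hmin i, pow_succ]
      ring
    rw [Finset.sum_congr rfl expand, Finset.sum_add_distrib, ← Finset.mul_sum, ← Finset.mul_sum,
      hT, ← expRank]
    ring
  rw [step2, hS1, hS2]
  nlinarith [sq_nonneg p]

lemma two_extract {ι : Type*} [DecidableEq ι] {M : Type*} [AddCommMonoid M] (L : Finset ι) {b₀ b₁ : ι}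
    (h0 : b₀ ∈ L) (h1 : b₁ ∈ L) (hne : b₁ ≠ b₀) (f : ι → M) :
    ∑ b ∈ L, f b = f b₀ + (f b₁ + ∑ b ∈ (L.erase b₀).erase b₁, f b) := by
  rw [Finset.add_sum_erase _ f (Finset.mem_erase.2 ⟨hne, h1⟩), Finset.add_sum_erase _ f h0]

theorem stmt13 {ι : Type*} (p : ℝ) (hp0 : 0 < p) (hp1 : p < 1)
    (L : Finset ι) (r : ι → ℕ) (tmax : ℕ)
    (t : ι → ℕ) (hfeas : (∑ b ∈ L, t b) = tmax)
    (hopt : ∀ t' : ι → ℕ, (∑ b ∈ L, t' b) = tmax →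
      ∑ b ∈ L, expRank p (r b) (t' b) ≤ ∑ b ∈ L, expRank p (r b) (t b))
    (hgt : (∑ b ∈ L, r b) < tmax) :
    ∀ b ∈ L, r b ≤ t b := by
  classical
  by_contra hcon
  push_neg at hcon
  obtain ⟨b₀, hb₀L, hb₀⟩ := hcon
  -- there exists b₁ with r b₁ < t b₁
  have hex : ∃ b₁ ∈ L, r b₁ < t b₁ := by
    by_contra hno
    push_neg at hno
    have : (∑ b ∈ L, t b) ≤ ∑ b ∈ L, r b := Finset.sum_le_sum hno
    omega
  obtain ⟨b₁, hb₁L, hb₁⟩ := hex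
  have hne : b₁ ≠ b₀ := by
    intro h; rw [h] at hb₁; omega
  have ht₁pos : 1 ≤ t b₁ := by omega
  set t' : ι → ℕ := Function.update (Function.update t b₁ (t b₁ - 1)) b₀ (t b₀ + 1) with ht'
  have ht'b₀ : t' b₀ = t b₀ + 1 := by simp [ht']
  have ht'b₁ : t' b₁ = t b₁ - 1 := by
    simp [ht', Function.update_of_ne hne]
  have ht'other : ∀ b, b ≠ b₀ → b ≠ b₁ → t' b = t b := by
    intro b h0 h1
    simp [ht', Function.update_of_ne h0, Function.update_of_ne h1]
  have hrest : ∀ (f : ι → ℕ → ℝ), (∑ b ∈ (L.erase b₀).erase b₁, f b (t' b))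
      = ∑ b ∈ (L.erase b₀).erase b₁, f b (t b) := by
    intro f
    apply Finset.sum_congr rfl
    intro b hb
    simp only [Finset.mem_erase] at hb
    rw [ht'other b hb.2.1 hb.1]
  have hrestn : (∑ b ∈ (L.erase b₀).erase b₁, t' b) = ∑ b ∈ (L.erase b₀).erase b₁, t b := by
    apply Finset.sum_congr rfl
    intro b hb
    simp only [Finset.mem_erase] at hb
    rw [ht'other b hb.2.1 hb.1]
  -- feasibility of t'
  have hfeas' : (∑ b ∈ L, t' b) = tmax := by
    rw [two_extract L hb₀L hb₁L hne t', ht'b₀, ht'b₁, hrestn]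
    rw [two_extract L hb₀L hb₁L hne t] at hfeas
    omega
  -- strict improvement
  have key : ∑ b ∈ L, expRank p (r b) (t b) < ∑ b ∈ L, expRank p (r b) (t' b) := by
    rw [two_extract L hb₀L hb₁L hne (fun b => expRank p (r b) (t' b)),
        two_extract L hb₀L hb₁L hne (fun b => expRank p (r b) (t b))]
    rw [hrest (fun b n => expRank p (r b) n), ht'b₀, ht'b₁]
    have e0 : expRank p (r b₀) (t b₀ + 1) = expRank p (r b₀) (t b₀) + (1 - p) * 1 := by
      rw [expRank_succ, betaP_eq_one hb₀]
    have e1 : expRank p (r b₁) (t b₁) = expRank p (r b₁) (t b₁ - 1) + (1 - p) * betaP p (t b₁ - 1) (r b₁) := by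
      conv_lhs => rw [show t b₁ = (t b₁ - 1) + 1 by omega]
      rw [expRank_succ]
    have hblt : betaP p (t b₁ - 1) (r b₁) < 1 := betaP_lt_one hp0 hp1 (by omega)
    rw [e0, e1]
    have hp' : (0:ℝ) < 1 - p := by linarith
    nlinarith
  have := hopt t' hfeas'
  linarith
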